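/- Uniqueness of the bimodule homomorphism: Let M be a von Neumann algebra, A a C*-algebra, C ⊆ A a unital sub-C*-algebra, π₁, π₂ : A → M unital *-homomorphisms, and φ : A → M a completely positive map which is a C-bimodule map with respect to π₁ (restricted to C). Then φ is a C-bimodule map with respect to π₂ (restricted to C) if and only if there exists a projection e ∈ π₁(C)′ ∩ π₂(C)′ such that φ(A) ⊆ eMe and (π₁ - π₂)(C) ⊆ e^⊥ M e^⊥, where e^⊥ = 1 - e. -/

import Mathlib

set_option synthInstance.maxHeartbeats 1000000
set_option maxHeartbeats 1000000

open scoped Matrix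

noncomputable section

/-- A map between (possibly non-unital) star rings is *completely positive* if each matrix
amplification maps positive elements (i.e. elements of the form `yᴴ * y`, which in a
C⋆-algebra are exactly the positive elements) to positive elements. -/
def CompletelyPositive {A B : Type*} [NonUnitalNonAssocSemiring A] [StarRing A]
    [NonUnitalNonAssocSemiring B] [StarRing B] (f : A → B) : Prop :=
  ∀ (n : ℕ) (x : Matrix (Fin n) (Fin n) A),
    (∃ y : Matrix (Fin n) (Fin n) A, x = yᴴ * y) →
    ∃ z : Matrix (Fin n) (Fin n) B, x.map f = zᴴ * z

/-- `f : A → W` is a `C`-bimodule map with respect to `π : C → W`, i.e.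
`f (c₁ * a * c₂) = π c₁ * f a * π c₂`. -/
def IsBimoduleMap {A W : Type*} [Ring A] [Algebra ℂ A] [StarRing A] [StarModule ℂ A] [Mul W]
    (C : StarSubalgebra ℂ A) (π : ↥C → W) (f : A → W) : Prop :=
  ∀ (a : A) (c₁ c₂ : C), f (↑c₁ * a * ↑c₂) = π c₁ * f a * π c₂

section Aux

variable {H : Type*} [NormedAddCommGroup H] [InnerProductSpace ℂ H] [CompleteSpace H]

/-- Closed subspace generated by a set. -/
def genK (s : Set H) : Submodule ℂ H := (Submodule.span ℂ s).topologicalClosure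

lemma genK_closed (s : Set H) : IsClosed ((genK s : Submodule ℂ H) : Set H) :=
  Submodule.isClosed_topologicalClosure _

instance genK_complete (s : Set H) : CompleteSpace (genK s) :=
  (genK_closed s).completeSpace_coe

lemma mem_genK {s : Set H} {y : H} (hy : y ∈ s) : y ∈ genK s :=
  Submodule.le_topologicalClosure _ (Submodule.subset_span hy)

/-- Orthogonal projection onto `genK s` as an operator on `H`. -/
def genE (s : Set H) : H →L[ℂ] H := (genK s).subtypeL ∘L (genK s).orthogonalProjectionOnto

lemma genE_mem (s : Set H) (x : H) : genE s x ∈ genK s :=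
  ((genK s).orthogonalProjectionOnto x).2

lemma genE_id {s : Set H} {x : H} (hx : x ∈ genK s) : genE s x = x := by
  have := Submodule.orthogonalProjectionOnto_mem_subspace_eq_self (K := genK s) ⟨x, hx⟩
  simpa [genE] using congrArg Subtype.val this

lemma genE_sa (s : Set H) : IsSelfAdjoint (genE s) :=
  isSelfAdjoint_starProjection (genK s)

lemma genE_idem (s : Set H) : genE s * genE s = genE s := by
  ext x
  exact genE_id (genE_mem s x)

lemma genE_span {s : Set H} {T : H →L[ℂ] H} (hT : ∀ y ∈ s, T y ∈ genK s) :
    ∀ x ∈ genK s, T x ∈ genK s := by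
  intro x hx
  have hle : genK s ≤ Submodule.comap (T : H →ₗ[ℂ] H) (genK s) := by
    apply Submodule.topologicalClosure_minimal
    · exact Submodule.span_le.mpr hT
    · exact (genK_closed s).preimage T.continuous
  exact hle hx

lemma genE_vanish {s : Set H} {T : H →L[ℂ] H} (hT : ∀ y ∈ s, T y = 0) :
    T * genE s = 0 := by
  have hle : genK s ≤ LinearMap.ker (T : H →ₗ[ℂ] H) := by
    apply Submodule.topologicalClosure_minimal
    · exact Submodule.span_le.mpr hT
    · exact (isClosed_singleton (x := (0 : H))).preimage T.continuous
  ext x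
  exact hle (genE_mem s x)

lemma genE_fixL {s : Set H} {T : H →L[ℂ] H} (hT : ∀ x, T x ∈ genK s) :
    genE s * T = T := by
  ext x
  exact genE_id (hT x)

lemma genE_comm {s : Set H} {T : H →L[ℂ] H}
    (h1 : ∀ y ∈ s, T y ∈ genK s) (h2 : ∀ y ∈ s, star T y ∈ genK s) :
    T * genE s = genE s * T := by
  set e := genE s with he
  have hsa : star e = e := (genE_sa s).star_eq
  have key : ∀ (S : H →L[ℂ] H), (∀ y ∈ s, S y ∈ genK s) → e * (S * e) = S * e := by
    intro S hS
    ext x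
    exact genE_id (genE_span hS _ (genE_mem s x))
  have k1 : e * (T * e) = T * e := key T h1
  have k2 : e * (star T * e) = star T * e := key (star T) h2
  have k3 : e * T * e = e * T := by
    have := congrArg star k2
    simpa [star_mul, hsa, mul_assoc] using this
  calc T * e = e * (T * e) := k1.symm
    _ = e * T * e := by rw [mul_assoc]
    _ = e * T := k3

end Aux

set_option maxHeartbeats 10000000 in
/-- Uniqueness of the bimodule homomorphism: given unital ⋆-homomorphisms `π₁, π₂ : A → M`
and a completely positive `φ : A → M` which is a `C`-bimodule map with respect to `π₁`, the
map `φ` is a `C`-bimodule map with respect to `π₂` iff there is a projection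
`e ∈ π₁(C)′ ∩ π₂(C)′` with `φ(A) ⊆ eMe` and `(π₁ - π₂)(C) ⊆ e^⊥ M e^⊥`. -/
theorem stmt9 {H : Type*} [NormedAddCommGroup H] [InnerProductSpace ℂ H] [CompleteSpace H]
    {A : Type*} [CStarAlgebra A]
    (M : VonNeumannAlgebra H)
    (C : StarSubalgebra ℂ A) (hC : IsClosed (C : Set A))
    (π₁ π₂ : A →⋆ₐ[ℂ] (H →L[ℂ] H))
    (hπ₁M : ∀ a : A, π₁ a ∈ M) (hπ₂M : ∀ a : A, π₂ a ∈ M)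
    (φ : A →ₗ[ℂ] (H →L[ℂ] H)) (hφM : ∀ a : A, φ a ∈ M)
    (hφcp : CompletelyPositive φ)
    (hbim₁ : IsBimoduleMap C (fun c : C => π₁ ↑c) φ) :
    IsBimoduleMap C (fun c : C => π₂ ↑c) φ ↔
      ∃ e : H →L[ℂ] H, e ∈ M ∧ IsSelfAdjoint e ∧ e * e = e ∧
        (∀ c : C, Commute e (π₁ ↑c) ∧ Commute e (π₂ ↑c)) ∧
        (∀ a : A, φ a = e * φ a * e) ∧
        (∀ c : C, π₁ ↑c - π₂ ↑c = (1 - e) * (π₁ ↑c - π₂ ↑c) * (1 - e)) := by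
  constructor
  · intro hbim₂
    have hL₁ : ∀ (c : C) (a : A), π₁ ↑c * φ a = φ (↑c * a) := by
      intro c a
      have := hbim₁ a c 1
      simpa using this.symm
    have hR₁ : ∀ (c : C) (a : A), φ a * π₁ ↑c = φ (a * ↑c) := by
      intro c a
      have := hbim₁ a 1 c
      simpa using this.symm
    have hL₂ : ∀ (c : C) (a : A), π₂ ↑c * φ a = φ (↑c * a) := by
      intro c a
      have := hbim₂ a c 1
      simpa using this.symm
    have hR₂ : ∀ (c : C) (a : A), φ a * π₂ ↑c = φ (a * ↑c) := by
      intro c a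
      have := hbim₂ a 1 c
      simpa using this.symm
    set s : Set H := {x | ∃ (a : A) (ξ : H), φ a ξ = x ∨ star (φ a) ξ = x} with hs
    have hmL : ∀ (b : A) (ζ : H), φ b ζ ∈ genK s := fun b ζ => mem_genK ⟨b, ζ, Or.inl rfl⟩
    have hmR : ∀ (b : A) (ζ : H), star (φ b) ζ ∈ genK s := fun b ζ => mem_genK ⟨b, ζ, Or.inr rfl⟩
    set e : H →L[ℂ] H := genE s with he
    have hsa : IsSelfAdjoint e := genE_sa s
    have hidem : e * e = e := genE_idem s
    -- φ a and star (φ a) are fixed by e on both sides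
    have hLe : ∀ a : A, e * φ a = φ a :=
      fun a => genE_fixL fun ξ => hmL a ξ
    have hLe' : ∀ a : A, e * star (φ a) = star (φ a) :=
      fun a => genE_fixL fun ξ => hmR a ξ
    have hRe : ∀ a : A, φ a * e = φ a := by
      intro a
      have := congrArg star (hLe' a)
      simpa [star_mul, hsa.star_eq] using this
    -- products with π's
    have hπφ : ∀ (π : A →⋆ₐ[ℂ] (H →L[ℂ] H)),
        (∀ (c : C) (a : A), φ a * π ↑c = φ (a * ↑c)) →
        ∀ (c : C) (a : A), π ↑c * star (φ a) = star (φ (a * star ↑c)) := by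
      intro π hR c a
      have h2 : φ a * π (star ↑c) = φ (a * star ↑c) := by
        have := hR (star c) a
        simpa using this
      rw [← h2, star_mul, map_star, star_star]
    -- e commutes with π₁ c and π₂ c
    have hcommπ : ∀ (π : A →⋆ₐ[ℂ] (H →L[ℂ] H)),
        (∀ (c : C) (a : A), π ↑c * φ a = φ (↑c * a)) →
        (∀ (c : C) (a : A), φ a * π ↑c = φ (a * ↑c)) →
        ∀ c : C, π ↑c * e = e * π ↑c := by
      intro π hL hR c
      have hgen : ∀ (c : C) (y : H), y ∈ s → π ↑c y ∈ genK s := by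
        rintro c y ⟨a, ξ, rfl | rfl⟩
        · have h3 : π ↑c (φ a ξ) = φ (↑c * a) ξ := by
            rw [← hL c a]; rfl
          rw [h3]
          exact hmL _ _
        · have h3 : π ↑c (star (φ a) ξ) = star (φ (a * star ↑c)) ξ := by
            rw [← hπφ π hR c a]; rfl
          rw [h3]
          exact hmR _ _
      have h1 : ∀ y ∈ s, π ↑c y ∈ genK s := hgen c
      have h2 : ∀ y ∈ s, star (π ↑c) y ∈ genK s := by
        have h4 : star (π ↑c) = π ↑(star c) := by
          rw [StarMemClass.coe_star, ← map_star]
        rw [h4]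
        exact hgen (star c)
      exact genE_comm h1 h2
    have hcπ₁ : ∀ c : C, π₁ ↑c * e = e * π₁ ↑c := hcommπ π₁ hL₁ hR₁
    have hcπ₂ : ∀ c : C, π₂ ↑c * e = e * π₂ ↑c := hcommπ π₂ hL₂ hR₂
    -- membership of e in M
    have heM : e ∈ M := by
      have hM : (M : Set (H →L[ℂ] H)) = Set.centralizer (Set.centralizer (M : Set _)) :=
        M.centralizer_centralizer'.symm
      have hmm : e ∈ Set.centralizer (Set.centralizer (M : Set (H →L[ℂ] H))) := by
        intro T hT
        have hTstar : star T ∈ Set.centralizer (M : Set (H →L[ℂ] H)) := by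
          intro m hm
          have h1 : star m ∈ (M : Set (H →L[ℂ] H)) := star_mem hm
          have h2 := hT (star m) h1
          calc m * star T = star (T * star m) := by rw [star_mul, star_star]
            _ = star (star m * T) := by rw [h2]
            _ = star T * m := by rw [star_mul, star_star]
        have hgen : ∀ (T : H →L[ℂ] H), T ∈ Set.centralizer (M : Set (H →L[ℂ] H)) →
            ∀ y ∈ s, T y ∈ genK s := by
          rintro T hT y ⟨a, ξ, rfl | rfl⟩
          · have h1 : φ a * T = T * φ a := hT (φ a) (hφM a)
            have h3 : T (φ a ξ) = φ a (T ξ) := by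
              have := congrArg (fun f : H →L[ℂ] H => f ξ) h1
              simpa using this.symm
            rw [h3]
            exact hmL _ _
          · have h1 : star (φ a) * T = T * star (φ a) := hT (star (φ a)) (star_mem (hφM a))
            have h3 : T (star (φ a) ξ) = star (φ a) (T ξ) := by
              have := congrArg (fun f : H →L[ℂ] H => f ξ) h1
              simpa using this.symm
            rw [h3]
            exact hmR _ _
        exact genE_comm (hgen T hT) (hgen (star T) hTstar)
      have hset : e ∈ (M : Set (H →L[ℂ] H)) := by rw [hM]; exact hmm
      exact hset
    -- the difference kills e
    have hde : ∀ c : C, (π₁ ↑c - π₂ ↑c) * e = 0 := by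
      intro c
      apply genE_vanish
      rintro y ⟨a, ξ, rfl | rfl⟩
      · have h1 : (π₁ ↑c - π₂ ↑c) * φ a = 0 := by
          rw [sub_mul, hL₁, hL₂, sub_self]
        calc (π₁ ↑c - π₂ ↑c) (φ a ξ) = ((π₁ ↑c - π₂ ↑c) * φ a) ξ := rfl
          _ = 0 := by rw [h1]; rfl
      · have h1 : (π₁ ↑c - π₂ ↑c) * star (φ a) = 0 := by
          rw [sub_mul, hπφ π₁ hR₁ c a, hπφ π₂ hR₂ c a, sub_self]
        calc (π₁ ↑c - π₂ ↑c) (star (φ a) ξ) = ((π₁ ↑c - π₂ ↑c) * star (φ a)) ξ := rfl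
          _ = 0 := by rw [h1]; rfl
    have hed : ∀ c : C, e * (π₁ ↑c - π₂ ↑c) = 0 := by
      intro c
      have h1 : star (π₁ ↑c - π₂ ↑c) = π₁ ↑(star c) - π₂ ↑(star c) := by
        rw [star_sub, StarMemClass.coe_star, ← map_star, ← map_star]
      have h2 := hde (star c)
      rw [← h1] at h2
      have h3 := congrArg star h2
      simpa [star_mul, hsa.star_eq] using h3
    refine ⟨e, heM, hsa, hidem, fun c => ⟨(hcπ₁ c).symm, (hcπ₂ c).symm⟩, ?_, ?_⟩
    · intro a
      rw [hLe, hRe]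
    · intro c
      rw [sub_mul, one_mul, hed, sub_zero, mul_sub, mul_one, hde, sub_zero]
  · rintro ⟨e, _, hsa, hidem, _, hφe, hd⟩
    have h1e : (1 - e) * e = 0 := by rw [sub_mul, one_mul, hidem, sub_self]
    have he1 : e * (1 - e) = 0 := by rw [mul_sub, mul_one, hidem, sub_self]
    have hπe : ∀ c : C, π₁ ↑c * e = π₂ ↑c * e := by
      intro c
      have h0 := congrArg (· * e) (hd c)
      simp only [mul_assoc] at h0
      rw [h1e, mul_zero, mul_zero] at h0
      have h2 : (π₁ ↑c - π₂ ↑c) * e = 0 := h0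
      rw [sub_mul, sub_eq_zero] at h2
      exact h2
    have heπ : ∀ c : C, e * π₁ ↑c = e * π₂ ↑c := by
      intro c
      have h0 := congrArg (e * ·) (hd c)
      simp only [← mul_assoc] at h0
      rw [he1, zero_mul, zero_mul] at h0
      have h2 : e * (π₁ ↑c - π₂ ↑c) = 0 := h0
      rw [mul_sub, sub_eq_zero] at h2
      exact h2
    intro a c₁ c₂
    rw [hbim₁ a c₁ c₂]
    have key : ∀ (π : A →⋆ₐ[ℂ] (H →L[ℂ] H)),
        π ↑c₁ * φ a * π ↑c₂ = (π ↑c₁ * e) * φ a * (e * π ↑c₂) := by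
      intro π
      conv_lhs => rw [hφe a]
      simp only [mul_assoc]
    rw [key π₁, key π₂, hπe c₁, heπ c₂]
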